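/- Let (D1, M) be a periodic first-derivative SBP operator with diagonal mass matrix (M symmetric positive definite and diagonal, M·D1 + D1ᵀ·M = 0) and D2 a periodic second-derivative SBP operator with the same mass matrix M (M·D2 = −A2, A2 symmetric positive semidefinite) such that D1·D2 = D2·D1. Let u : ℝ → ℝ^m be differentiable and satisfy the split-form Fornberg-Whitham semidiscretization ∂ₜu = −(1/3)·D1·(u∘u) − (1/3)·u∘(D1·u) − (I − D2)⁻¹·D1·u for all t. Then the discrete quadratic invariant u(t)ᵀ·M·u(t) is constant in t. -/

import Mathlib

open Matrix

private lemma skew_dot {m : ℕ} (K : Matrix (Fin m) (Fin m) ℝ) (hK : Kᵀ = -K)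
    (x y : Fin m → ℝ) : x ⬝ᵥ (K *ᵥ y) = -(y ⬝ᵥ (K *ᵥ x)) := by
  rw [Matrix.dotProduct_mulVec, ← Matrix.mulVec_transpose, hK, Matrix.neg_mulVec,
    neg_dotProduct, dotProduct_comm]

private lemma diag_dot {m : ℕ} (M : Matrix (Fin m) (Fin m) ℝ) (hMdiag : M.IsDiag)
    (x y v : Fin m → ℝ) : x ⬝ᵥ (M *ᵥ (y * v)) = (x * y) ⬝ᵥ (M *ᵥ v) := by
  simp only [dotProduct, Matrix.mulVec, Pi.mul_apply]
  refine Finset.sum_congr rfl fun i _ => ?_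
  have h1 : ∑ j, M i j * (y j * v j) = M i i * (y i * v i) :=
    Finset.sum_eq_single i (fun j _ hj => by rw [hMdiag (Ne.symm hj), zero_mul]) (by simp)
  have h2 : ∑ j, M i j * v j = M i i * v i :=
    Finset.sum_eq_single i (fun j _ hj => by rw [hMdiag (Ne.symm hj), zero_mul]) (by simp)
  rw [h1, h2]; ring

/-- The split-form Fornberg-Whitham semidiscretization
`∂ₜu = −(1/3) D1 (u∘u) − (1/3) u∘(D1 u) − (I − D2)⁻¹ D1 u`
with commuting periodic SBP operators `D1`, `D2` sharing a diagonal
symmetric positive definite mass matrix `M` conserves the discrete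
quadratic invariant `uᵀ·M·u`. -/
theorem fornberg_whitham_conserves_quadratic_invariant
    (m : ℕ) (D1 D2 M A2 : Matrix (Fin m) (Fin m) ℝ)
    (hM : M.PosDef) (hMdiag : M.IsDiag)
    (hD1 : M * D1 + D1ᵀ * M = 0)
    (hA2 : A2.PosSemidef)
    (hD2 : M * D2 = -A2)
    (hcomm : D1 * D2 = D2 * D1)
    (u : ℝ → Fin m → ℝ)
    (hu : ∀ t, HasDerivAt u
      (-((1 / 3 : ℝ) • (D1 *ᵥ (u t * u t))
        + (1 / 3 : ℝ) • (u t * (D1 *ᵥ u t))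
        + (1 - D2)⁻¹ *ᵥ (D1 *ᵥ u t))) t) :
    ∀ t₁ t₂ : ℝ, u t₁ ⬝ᵥ (M *ᵥ u t₁) = u t₂ ⬝ᵥ (M *ᵥ u t₂) := by
  -- basic symmetry facts
  have hMsymm : Mᵀ = M := by simpa [Matrix.IsHermitian] using hM.isHermitian
  have hA2symm : A2ᵀ = A2 := by simpa [Matrix.IsHermitian] using hA2.isHermitian
  have hD1M : D1ᵀ * M = -(M * D1) := eq_neg_of_add_eq_zero_right hD1
  -- the positive definite matrix S = M + A2 = M * (1 - D2)
  set S := M + A2 with hS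
  have hSpd : S.PosDef := hM.add_posSemidef hA2
  have hMS : M * (1 - D2) = S := by
    rw [mul_sub, mul_one, hD2, hS, sub_neg_eq_add]
  have hdet : IsUnit (1 - D2).det := by
    have h1 : M.det * (1 - D2).det = S.det := by rw [← Matrix.det_mul, hMS]
    refine isUnit_iff_ne_zero.mpr fun h => ?_
    rw [h, mul_zero] at h1
    exact (ne_of_gt hSpd.det_pos) h1.symm
  set B := (1 - D2)⁻¹ with hB
  have hBl : B * (1 - D2) = 1 := Matrix.nonsing_inv_mul _ hdet
  have hBr : (1 - D2) * B = 1 := Matrix.mul_nonsing_inv _ hdet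
  -- B commutes with D1
  have hc : D1 * (1 - D2) = (1 - D2) * D1 := by
    rw [mul_sub, sub_mul, mul_one, one_mul, hcomm]
  have hcB : B * D1 = D1 * B := by
    calc B * D1 = B * D1 * ((1 - D2) * B) := by rw [hBr, mul_one]
    _ = B * (D1 * (1 - D2)) * B := by noncomm_ring
    _ = B * ((1 - D2) * D1) * B := by rw [hc]
    _ = (B * (1 - D2)) * (D1 * B) := by noncomm_ring
    _ = D1 * B := by rw [hBl, one_mul]
  -- M * B is symmetric
  have hSsymm : Sᵀ = S := by rw [hS, Matrix.transpose_add, hMsymm, hA2symm]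
  have hTS : (1 - D2)ᵀ * (M * B) = M := by
    have h2 : (1 - D2)ᵀ * M = S := by
      rw [← hSsymm, ← hMS, Matrix.transpose_mul, hMsymm]
    rw [← mul_assoc, h2, ← hMS, mul_assoc, hBr, mul_one]
  have hBT : Bᵀ * (1 - D2)ᵀ = 1 := by
    rw [← Matrix.transpose_mul, hBr, Matrix.transpose_one]
  have hBM : Bᵀ * M = M * B := by
    calc Bᵀ * M = Bᵀ * ((1 - D2)ᵀ * (M * B)) := by rw [hTS]
    _ = (Bᵀ * (1 - D2)ᵀ) * (M * B) := by rw [mul_assoc]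
    _ = M * B := by rw [hBT, one_mul]
  -- skew-symmetry of M * D1 and of M * B * D1
  have hK1 : (M * D1)ᵀ = -(M * D1) := by rw [Matrix.transpose_mul, hMsymm, hD1M]
  have hK3 : (M * B * D1)ᵀ = -(M * B * D1) := by
    calc (M * B * D1)ᵀ = D1ᵀ * (Bᵀ * Mᵀ) := by rw [Matrix.transpose_mul, Matrix.transpose_mul]
    _ = D1ᵀ * (M * B) := by rw [hMsymm, hBM]
    _ = (D1ᵀ * M) * B := by rw [mul_assoc]
    _ = -(M * (D1 * B)) := by rw [hD1M, neg_mul, mul_assoc]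
    _ = -(M * B * D1) := by rw [← hcB, mul_assoc]
  -- the rhs of the ODE
  set f : ℝ → Fin m → ℝ := fun t =>
      -((1 / 3 : ℝ) • (D1 *ᵥ (u t * u t))
        + (1 / 3 : ℝ) • (u t * (D1 *ᵥ u t))
        + B *ᵥ (D1 *ᵥ u t)) with hf
  have hu' : ∀ t, HasDerivAt u (f t) t := hu
  -- the key algebraic identity:  xᵀ M f = 0
  have hkey : ∀ t, u t ⬝ᵥ (M *ᵥ f t) = 0 := by
    intro t
    set x := u t with hx
    have hT1 : x ⬝ᵥ (M *ᵥ (D1 *ᵥ (x * x))) = -((x * x) ⬝ᵥ ((M * D1) *ᵥ x)) := by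
      rw [Matrix.mulVec_mulVec, skew_dot (M * D1) hK1]
    have hT2 : x ⬝ᵥ (M *ᵥ (x * (D1 *ᵥ x))) = (x * x) ⬝ᵥ ((M * D1) *ᵥ x) := by
      rw [diag_dot M hMdiag, Matrix.mulVec_mulVec]
    have hT3 : x ⬝ᵥ (M *ᵥ (B *ᵥ (D1 *ᵥ x))) = 0 := by
      rw [Matrix.mulVec_mulVec, Matrix.mulVec_mulVec]
      have := skew_dot (M * B * D1) hK3 x x
      linarith
    simp only [hf, Matrix.mulVec_neg, Matrix.mulVec_add, Matrix.mulVec_smul,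
      dotProduct_neg, dotProduct_add, dotProduct_smul, ← hx]
    rw [hT1, hT2, hT3]
    simp
  -- the energy has derivative zero
  have hE : ∀ t, HasDerivAt (fun s => u s ⬝ᵥ (M *ᵥ u s)) 0 t := by
    intro t
    have hder : HasDerivAt (fun s => u s ⬝ᵥ (M *ᵥ u s))
        (f t ⬝ᵥ (M *ᵥ u t) + u t ⬝ᵥ (M *ᵥ f t)) t := by
      have hcomp : ∀ i, HasDerivAt (fun s => u s i) (f t i) t := fun i =>
        ((ContinuousLinearMap.proj i : (Fin m → ℝ) →L[ℝ] ℝ).hasFDerivAt.comp_hasDerivAt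
          t (hu' t))
      have key : HasDerivAt (fun s => ∑ i, u s i * ∑ j, M i j * u s j)
          (∑ i, (f t i * ∑ j, M i j * u t j + u t i * ∑ j, M i j * f t j)) t := by
        refine HasDerivAt.fun_sum fun i _ => ?_
        exact (hcomp i).mul (HasDerivAt.fun_sum fun j _ => (hcomp j).const_mul (M i j))
      have heq : (fun s => u s ⬝ᵥ (M *ᵥ u s))
          = fun s => ∑ i, u s i * ∑ j, M i j * u s j := by
        funext s; simp [dotProduct, Matrix.mulVec]
      rw [heq]
      convert key using 1
      simp [dotProduct, Matrix.mulVec, Finset.sum_add_distrib, Finset.mul_sum]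
    have hsym : f t ⬝ᵥ (M *ᵥ u t) = u t ⬝ᵥ (M *ᵥ f t) := by
      rw [Matrix.dotProduct_mulVec, ← Matrix.mulVec_transpose, hMsymm,
        dotProduct_comm]
    rw [hsym, hkey t] at hder
    simpa using hder
  -- conclude constancy
  intro t₁ t₂
  exact is_const_of_deriv_eq_zero (fun t => (hE t).differentiableAt)
    (fun t => (hE t).deriv) t₁ t₂
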